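/- Let (M, ρ) be a metric space equipped with a measure μ, and let f : X^n → M be a summary with global sensitivity Δ, i.e. ρ(f(D), f(D')) ≤ Δ for all adjacent databases D ~ D'. Suppose for every η ∈ M the normalizing constant C_{η,σ} = ∫_M exp(−ρ(η,m)/σ) dμ(m) is finite and positive for σ = 2Δ/ε. Then the Laplace mechanism that outputs a draw from the density m ↦ C_{f(D),σ}^{-1} exp(−ρ(f(D),m)/σ) with respect to μ satisfies ε-differential privacy: for all adjacent D ~ D' and all measurable A ⊆ M, P(output ∈ A | D) ≤ e^ε · P(output ∈ A | D'). -/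

import Mathlib

open MeasureTheory ENNReal

theorem laplace_mechanism_dp
    {X M : Type*} [MetricSpace M] [MeasurableSpace M]
    (μ : Measure M) {n : ℕ} (f : (Fin n → X) → M) (Δ ε : ℝ)
    (hΔ : 0 < Δ) (hε : 0 < ε)
    (hsens : ∀ D D' : Fin n → X, (∃ i, ∀ j, j ≠ i → D j = D' j) →
      dist (f D) (f D') ≤ Δ)
    (C : M → ℝ≥0∞)
    (hC : ∀ η, C η = ∫⁻ m, ENNReal.ofReal (Real.exp (-(dist η m) / (2 * Δ / ε))) ∂μ)
    (hCpos : ∀ η, 0 < C η) (hCfin : ∀ η, C η < ⊤) :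
    ∀ D D' : Fin n → X, (∃ i, ∀ j, j ≠ i → D j = D' j) →
      ∀ A : Set M, MeasurableSet A →
        ∫⁻ m in A, ENNReal.ofReal (Real.exp (-(dist (f D) m) / (2 * Δ / ε))) /
            C (f D) ∂μ ≤
          ENNReal.ofReal (Real.exp ε) *
            ∫⁻ m in A, ENNReal.ofReal (Real.exp (-(dist (f D') m) / (2 * Δ / ε))) /
              C (f D') ∂μ := by
  intro D D' hadj A hA
  set σ : ℝ := 2 * Δ / ε with hσdef
  have hσ : 0 < σ := by positivity
  set k : ℝ≥0∞ := ENNReal.ofReal (Real.exp (ε / 2)) with hk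
  -- pointwise kernel bound
  have key : ∀ η η' : M, dist η η' ≤ Δ → ∀ m : M,
      ENNReal.ofReal (Real.exp (-(dist η m) / σ)) ≤
        k * ENNReal.ofReal (Real.exp (-(dist η' m) / σ)) := by
    intro η η' hd m
    rw [hk, ← ENNReal.ofReal_mul (Real.exp_nonneg _), ← Real.exp_add]
    apply ENNReal.ofReal_le_ofReal
    apply Real.exp_le_exp.2
    have h1 : dist η' m - dist η m ≤ Δ := by
      have := dist_triangle η' η m
      rw [dist_comm η' η] at this
      linarith
    have hΔσ : Δ / σ = ε / 2 := by
      field_simp [hσdef]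
      rw [hσdef, div_mul_cancel₀ _ hε.ne', mul_comm]
    have h2 : (-(dist η m) - -(dist η' m)) / σ ≤ Δ / σ :=
      by gcongr; linarith
    rw [hΔσ, sub_div] at h2
    linarith
  have hd : dist (f D) (f D') ≤ Δ := hsens D D' hadj
  have hd' : dist (f D') (f D) ≤ Δ := by rw [dist_comm]; exact hd
  -- normalizing constant bound : C (f D') ≤ k * C (f D)
  have hCle : C (f D') ≤ k * C (f D) := by
    rw [hC, hC, ← lintegral_const_mul' _ _ (by simp [hk])]
    exact lintegral_mono fun m => key _ _ hd' m
  have hk0 : k ≠ 0 := by simp [hk, Real.exp_pos]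
  have hkfin : k ≠ ⊤ := by simp [hk]
  -- inverse bound
  have hinv : (C (f D))⁻¹ ≤ k / C (f D') := by
    rw [ENNReal.le_div_iff_mul_le (Or.inl (hCpos _).ne') (Or.inl (hCfin _).ne)]
    calc (C (f D))⁻¹ * C (f D') ≤ (C (f D))⁻¹ * (k * C (f D)) :=
          by gcongr
      _ = k * ((C (f D))⁻¹ * C (f D)) := by ring
      _ = k := by
          rw [ENNReal.inv_mul_cancel (hCpos _).ne' (hCfin _).ne, mul_one]
  have hkk : k * k = ENNReal.ofReal (Real.exp ε) := by
    rw [hk, ← ENNReal.ofReal_mul (Real.exp_nonneg _), ← Real.exp_add]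
    norm_num
  calc ∫⁻ m in A, ENNReal.ofReal (Real.exp (-(dist (f D) m) / σ)) / C (f D) ∂μ
      ≤ ∫⁻ m in A, ENNReal.ofReal (Real.exp ε) *
          (ENNReal.ofReal (Real.exp (-(dist (f D') m) / σ)) / C (f D')) ∂μ := by
        apply lintegral_mono
        intro m
        dsimp only
        rw [div_eq_mul_inv]
        calc ENNReal.ofReal (Real.exp (-(dist (f D) m) / σ)) * (C (f D))⁻¹
            ≤ (k * ENNReal.ofReal (Real.exp (-(dist (f D') m) / σ))) *
              (k / C (f D')) :=
              mul_le_mul' (key _ _ hd m) hinv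
          _ = (k * k) * (ENNReal.ofReal (Real.exp (-(dist (f D') m) / σ)) / C (f D')) := by
              rw [div_eq_mul_inv, div_eq_mul_inv, mul_mul_mul_comm,
                ← div_eq_mul_inv (ENNReal.ofReal _)]
          _ = _ := by rw [hkk]
    _ = ENNReal.ofReal (Real.exp ε) *
        ∫⁻ m in A, ENNReal.ofReal (Real.exp (-(dist (f D') m) / σ)) / C (f D') ∂μ :=
        lintegral_const_mul' _ _ (by simp)
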